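/- Let X, Y, U be random variables on finite alphabets with joint pmf P. Then ρ_m(X;Y|U) = max over u with P_U(u) > 0 of ρ_m(X;Y | U = u), where ρ_m(X;Y | U = u) denotes the (unconditional) maximal correlation of X and Y computed under the conditional distribution P_{XY|U=u}. -/

import Mathlib

open scoped BigOperators Classical

noncomputable section

namespace GCI

/-- A bundled finite alphabet. -/
structure FinAlph : Type 1 where
  carrier : Type
  [fin : Fintype carrier]

instance : CoeSort FinAlph Type := ⟨FinAlph.carrier⟩
instance (A : FinAlph) : Fintype A := A.fin

variable {Ω : Type} [Fintype Ω]

/-- `p` is a probability mass function on the finite sample space `Ω`. -/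
def IsPMF (p : Ω → ℝ) : Prop := (∀ ω, 0 ≤ p ω) ∧ ∑ ω, p ω = 1

/-- Expectation of a real random variable `f` under the pmf `p`. -/
def expec (p : Ω → ℝ) (f : Ω → ℝ) : ℝ := ∑ ω, p ω * f ω

/-- Marginal pmf of the random variable `X` under `p`. -/
def marg {𝒳 : Type} (p : Ω → ℝ) (X : Ω → 𝒳) (x : 𝒳) : ℝ :=
  ∑ ω, if X ω = x then p ω else 0

/-- Conditional expectation `E[f | U = u]`. -/
def cexp {𝒰 : Type} (p : Ω → ℝ) (U : Ω → 𝒰) (u : 𝒰) (f : Ω → ℝ) : ℝ :=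
  (∑ ω, if U ω = u then p ω * f ω else 0) / marg p U u

/-- `E[cov(f, g | U)]`. -/
def ccov {𝒰 : Type} (p : Ω → ℝ) (U : Ω → 𝒰) (f g : Ω → ℝ) : ℝ :=
  expec p fun ω => (f ω - cexp p U (U ω) f) * (g ω - cexp p U (U ω) g)

/-- `E[var(f | U)]`. -/
def cvar {𝒰 : Type} (p : Ω → ℝ) (U : Ω → 𝒰) (f : Ω → ℝ) : ℝ := ccov p U f f

/-- Conditional Pearson correlation `ρ(f; g | U)`. -/
def ccorr {𝒰 : Type} (p : Ω → ℝ) (U : Ω → 𝒰) (f g : Ω → ℝ) : ℝ :=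
  if 0 < cvar p U f * cvar p U g then
    ccov p U f g / (Real.sqrt (cvar p U f) * Real.sqrt (cvar p U g))
  else 0

/-- Conditional correlation ratio `θ(X; Y | U)` for a real-valued `X`. -/
def cratio {𝒴 𝒰 : Type} (p : Ω → ℝ) (U : Ω → 𝒰) (X : Ω → ℝ) (Y : Ω → 𝒴) : ℝ :=
  ⨆ g : 𝒴 × 𝒰 → ℝ, ccorr p U X fun ω => g (Y ω, U ω)

/-- Conditional maximal correlation `ρ_m(X; Y | U)`. -/
def maxCorr {𝒳 𝒴 𝒰 : Type} (p : Ω → ℝ) (U : Ω → 𝒰) (X : Ω → 𝒳) (Y : Ω → 𝒴) : ℝ :=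
  ⨆ f : 𝒳 × 𝒰 → ℝ, ⨆ g : 𝒴 × 𝒰 → ℝ,
    ccorr p U (fun ω => f (X ω, U ω)) fun ω => g (Y ω, U ω)

/-- Unconditional Pearson correlation. -/
def corr0 (p : Ω → ℝ) (f g : Ω → ℝ) : ℝ := ccorr p (fun _ => ()) f g

/-- Unconditional correlation ratio `θ(X;Y)`. -/
def ratio0 {𝒴 : Type} (p : Ω → ℝ) (X : Ω → ℝ) (Y : Ω → 𝒴) : ℝ :=
  cratio p (fun _ => ()) X Y

/-- Unconditional maximal correlation `ρ_m(X;Y)`. -/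
def maxCorr0 {𝒳 𝒴 : Type} (p : Ω → ℝ) (X : Ω → 𝒳) (Y : Ω → 𝒴) : ℝ :=
  maxCorr p (fun _ => ()) X Y

/-- Shannon entropy (base 2) of the random variable `X` under `p`. -/
def ent {𝒳 : Type} [Fintype 𝒳] (p : Ω → ℝ) (X : Ω → 𝒳) : ℝ :=
  ∑ x, -(marg p X x * Real.logb 2 (marg p X x))

/-- Conditional Shannon entropy `H(X | U)`. -/
def condEnt {𝒳 𝒰 : Type} [Fintype 𝒳] [Fintype 𝒰] (p : Ω → ℝ) (X : Ω → 𝒳) (U : Ω → 𝒰) : ℝ :=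
  ent p (fun ω => (X ω, U ω)) - ent p U

/-- Mutual information `I(X; U)`. -/
def mutInfo {𝒳 𝒰 : Type} [Fintype 𝒳] [Fintype 𝒰] (p : Ω → ℝ) (X : Ω → 𝒳) (U : Ω → 𝒰) : ℝ :=
  ent p X + ent p U - ent p fun ω => (X ω, U ω)

/-- Almost-sure equality of two discrete random variables. -/
def AEEq {𝒱 : Type} (p : Ω → ℝ) (f g : Ω → 𝒱) : Prop := ∀ ω, 0 < p ω → f ω = g ω

/-- The Gács–Körner common information `C_GK(X;Y)`. -/
def CGK {𝒳 𝒴 : Type} (p : Ω → ℝ) (X : Ω → 𝒳) (Y : Ω → 𝒴) : ℝ :=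
  sSup { r | ∃ (𝒱 : FinAlph) (f : 𝒳 → 𝒱) (g : 𝒴 → 𝒱),
    AEEq p (fun ω => f (X ω)) (fun ω => g (Y ω)) ∧ r = ent p fun ω => f (X ω) }

/-- The conditional Gács–Körner common information `C_GK(X;Y|U)`. -/
def CGKcond {𝒳 𝒴 𝒰 : Type} [Fintype 𝒰] (p : Ω → ℝ) (X : Ω → 𝒳) (Y : Ω → 𝒴)
    (U : Ω → 𝒰) : ℝ :=
  sSup { r | ∃ (𝒱 : FinAlph) (f : 𝒳 × 𝒰 → 𝒱) (g : 𝒴 × 𝒰 → 𝒱),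
    AEEq p (fun ω => f (X ω, U ω)) (fun ω => g (Y ω, U ω)) ∧
    r = condEnt p (fun ω => f (X ω, U ω)) U }

/-- The `β`-approximate common information (approximate information-correlation function). -/
def Cbeta {𝒳 𝒴 : Type} [Fintype 𝒳] [Fintype 𝒴] (p : 𝒳 × 𝒴 → ℝ) (β : ℝ) : ℝ :=
  sInf { r | ∃ (𝒰 : FinAlph) (q : (𝒳 × 𝒴) × 𝒰 → ℝ),
    IsPMF q ∧ (∀ a, marg q Prod.fst a = p a) ∧
    maxCorr q Prod.snd (fun a => a.1.1) (fun a => a.1.2) ≤ β ∧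
    r = mutInfo q Prod.fst Prod.snd }

/-- The `n`-th term in the definition of the `β`-exact common information:
the normalized smallest entropy of an auxiliary variable for `n` i.i.d. copies. -/
def KbetaN {𝒳 𝒴 : Type} [Fintype 𝒳] [Fintype 𝒴] (p : 𝒳 × 𝒴 → ℝ) (β : ℝ) (n : ℕ) : ℝ :=
  sInf { r | ∃ (𝒰 : FinAlph) (q : ((Fin n → 𝒳) × (Fin n → 𝒴)) × 𝒰 → ℝ),
    IsPMF q ∧
    (∀ a : (Fin n → 𝒳) × (Fin n → 𝒴), marg q Prod.fst a = ∏ i, p (a.1 i, a.2 i)) ∧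
    maxCorr q Prod.snd (fun a => a.1.1) (fun a => a.1.2) ≤ β ∧
    r = (1 / (n : ℝ)) * ent q Prod.snd }

/-- The `β`-exact common information (exact information-correlation function). -/
def Kbeta {𝒳 𝒴 : Type} [Fintype 𝒳] [Fintype 𝒴] (p : 𝒳 × 𝒴 → ℝ) (β : ℝ) : ℝ :=
  Filter.limUnder Filter.atTop fun n => KbetaN p β n


/-- The pmf on `Ω` obtained by conditioning `p` on the event `U = u`. -/
def condPMF {𝒰 : Type} (p : Ω → ℝ) (U : Ω → 𝒰) (u : 𝒰) : Ω → ℝ :=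
  fun ω => (if U ω = u then p ω else 0) / marg p U u

section Helpers

open Real

variable {Ω : Type} [Fintype Ω] {𝒰 : Type}

lemma expec_nonneg {p f : Ω → ℝ} (hp : ∀ ω, 0 ≤ p ω) (hf : ∀ ω, 0 ≤ f ω) :
    0 ≤ expec p f :=
  Finset.sum_nonneg fun ω _ => mul_nonneg (hp ω) (hf ω)

lemma cvar_nonneg {p : Ω → ℝ} (hp : ∀ ω, 0 ≤ p ω) (U : Ω → 𝒰) (f : Ω → ℝ) :
    0 ≤ cvar p U f :=
  expec_nonneg hp fun ω => mul_self_nonneg _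

lemma ccov_sq_le {p : Ω → ℝ} (hp : ∀ ω, 0 ≤ p ω) (U : Ω → 𝒰) (f g : Ω → ℝ) :
    (ccov p U f g) ^ 2 ≤ cvar p U f * cvar p U g := by
  have key := Finset.sum_mul_sq_le_sq_mul_sq Finset.univ
    (fun ω => Real.sqrt (p ω) * (f ω - cexp p U (U ω) f))
    (fun ω => Real.sqrt (p ω) * (g ω - cexp p U (U ω) g))
  have h1 : ∀ ω : Ω, (Real.sqrt (p ω) * (f ω - cexp p U (U ω) f)) *
      (Real.sqrt (p ω) * (g ω - cexp p U (U ω) g)) =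
      p ω * ((f ω - cexp p U (U ω) f) * (g ω - cexp p U (U ω) g)) := by
    intro ω
    have hs := Real.mul_self_sqrt (hp ω)
    set s := Real.sqrt (p ω) with hsdef
    rw [← hs]; ring
  have h2 : ∀ (h : Ω → ℝ) ω, (Real.sqrt (p ω) * (h ω - cexp p U (U ω) h)) ^ 2 =
      p ω * ((h ω - cexp p U (U ω) h) * (h ω - cexp p U (U ω) h)) := by
    intro h ω
    have hs := Real.mul_self_sqrt (hp ω)
    set s := Real.sqrt (p ω) with hsdef
    rw [← hs]; ring
  calc (ccov p U f g) ^ 2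
      = (∑ ω, (Real.sqrt (p ω) * (f ω - cexp p U (U ω) f)) *
          (Real.sqrt (p ω) * (g ω - cexp p U (U ω) g))) ^ 2 := by
        unfold ccov expec; congr 1; exact Finset.sum_congr rfl fun ω _ => (h1 ω).symm
    _ ≤ (∑ ω, (Real.sqrt (p ω) * (f ω - cexp p U (U ω) f)) ^ 2) *
        (∑ ω, (Real.sqrt (p ω) * (g ω - cexp p U (U ω) g)) ^ 2) := key
    _ = cvar p U f * cvar p U g := by
        unfold cvar ccov expec
        congr 1 <;> exact Finset.sum_congr rfl fun ω _ => h2 _ ω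

lemma ccov_le_sqrt {p : Ω → ℝ} (hp : ∀ ω, 0 ≤ p ω) (U : Ω → 𝒰) (f g : Ω → ℝ) :
    ccov p U f g ≤ Real.sqrt (cvar p U f) * Real.sqrt (cvar p U g) := by
  have h := ccov_sq_le hp U f g
  have h2 : ccov p U f g ≤ Real.sqrt ((ccov p U f g) ^ 2) := by
    rw [Real.sqrt_sq_eq_abs]; exact le_abs_self _
  calc ccov p U f g ≤ Real.sqrt ((ccov p U f g) ^ 2) := h2
    _ ≤ Real.sqrt (cvar p U f * cvar p U g) := Real.sqrt_le_sqrt h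
    _ = Real.sqrt (cvar p U f) * Real.sqrt (cvar p U g) :=
        Real.sqrt_mul (cvar_nonneg hp U f) _

lemma ccorr_le_one {p : Ω → ℝ} (hp : ∀ ω, 0 ≤ p ω) (U : Ω → 𝒰) (f g : Ω → ℝ) :
    ccorr p U f g ≤ 1 := by
  unfold ccorr
  split_ifs with h
  · rcases mul_pos_iff.mp h with ⟨hf, hg⟩ | ⟨hf, hg⟩
    · rw [div_le_one (mul_pos (Real.sqrt_pos.mpr hf) (Real.sqrt_pos.mpr hg))]
      exact ccov_le_sqrt hp U f g
    · exact absurd hf (not_lt.mpr (cvar_nonneg hp U f))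
  · exact zero_le_one

end Helpers
section Helpers2

open Real

variable {Ω : Type} [Fintype Ω] {𝒰 : Type}

lemma cexp_congr {p : Ω → ℝ} (U : Ω → 𝒰) {f f' : Ω → ℝ}
    (h : ∀ ω, p ω ≠ 0 → f ω = f' ω) (u : 𝒰) : cexp p U u f = cexp p U u f' := by
  unfold cexp
  congr 1
  refine Finset.sum_congr rfl fun ω _ => ?_
  by_cases hU : U ω = u
  · simp only [hU, if_true]
    by_cases hpω : p ω = 0
    · rw [hpω]; ring
    · rw [h ω hpω]
  · simp [hU]

lemma ccov_congr {p : Ω → ℝ} (U : Ω → 𝒰) {f f' g g' : Ω → ℝ}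
    (hf : ∀ ω, p ω ≠ 0 → f ω = f' ω) (hg : ∀ ω, p ω ≠ 0 → g ω = g' ω) :
    ccov p U f g = ccov p U f' g' := by
  unfold ccov expec
  refine Finset.sum_congr rfl fun ω _ => ?_
  dsimp only
  by_cases hpω : p ω = 0
  · rw [hpω]; ring
  · rw [hf ω hpω, hg ω hpω, cexp_congr U hf, cexp_congr U hg]

lemma ccorr_congr {p : Ω → ℝ} (U : Ω → 𝒰) {f f' g g' : Ω → ℝ}
    (hf : ∀ ω, p ω ≠ 0 → f ω = f' ω) (hg : ∀ ω, p ω ≠ 0 → g ω = g' ω) :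
    ccorr p U f g = ccorr p U f' g' := by
  unfold ccorr cvar
  rw [ccov_congr U hf hg, ccov_congr U hf hf, ccov_congr U hg hg]

lemma cexp_neg {p : Ω → ℝ} (U : Ω → 𝒰) (u : 𝒰) (g : Ω → ℝ) :
    cexp p U u (fun ω => -(g ω)) = - cexp p U u g := by
  unfold cexp
  rw [← neg_div]
  congr 1
  rw [← Finset.sum_neg_distrib]
  refine Finset.sum_congr rfl fun ω _ => ?_
  by_cases hU : U ω = u <;> simp [hU]

lemma ccov_neg_right {p : Ω → ℝ} (U : Ω → 𝒰) (f g : Ω → ℝ) :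
    ccov p U f (fun ω => -(g ω)) = - ccov p U f g := by
  unfold ccov expec
  rw [← Finset.sum_neg_distrib]
  refine Finset.sum_congr rfl fun ω _ => ?_
  dsimp only
  rw [cexp_neg]; ring

lemma cvar_neg {p : Ω → ℝ} (U : Ω → 𝒰) (g : Ω → ℝ) :
    cvar p U (fun ω => -(g ω)) = cvar p U g := by
  unfold cvar ccov expec
  refine Finset.sum_congr rfl fun ω _ => ?_
  dsimp only
  rw [cexp_neg]; ring

lemma ccorr_neg_right {p : Ω → ℝ} (U : Ω → 𝒰) (f g : Ω → ℝ) :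
    ccorr p U f (fun ω => -(g ω)) = - ccorr p U f g := by
  unfold ccorr
  rw [cvar_neg, ccov_neg_right]
  split_ifs with h
  · rw [neg_div]
  · rw [neg_zero]

lemma ccov_zero {p : Ω → ℝ} (U : Ω → 𝒰) :
    ccov p U (fun _ => (0:ℝ)) (fun _ => (0:ℝ)) = 0 := by
  unfold ccov expec
  refine Finset.sum_eq_zero fun ω _ => ?_
  dsimp only
  have : cexp p U (U ω) (fun _ => (0:ℝ)) = 0 := by
    unfold cexp
    have : (∑ ω', if U ω' = U ω then p ω' * (0:ℝ) else 0) = 0 :=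
      Finset.sum_eq_zero fun ω' _ => by split_ifs <;> simp
    rw [this, zero_div]
  rw [this]; ring

lemma cvar_zero_fun {p : Ω → ℝ} (U : Ω → 𝒰) : cvar p U (fun _ => (0:ℝ)) = 0 :=
  ccov_zero U

lemma ccorr_zero_left {p : Ω → ℝ} (U : Ω → 𝒰) (g : Ω → ℝ) :
    ccorr p U (fun _ => (0:ℝ)) g = 0 := by
  unfold ccorr
  rw [show cvar p U (fun _ => (0:ℝ)) = 0 from cvar_zero_fun U]
  simp

end Helpers2
section Helpers3

open Real

variable {Ω : Type} [Fintype Ω] {𝒰 : Type}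

lemma marg_nonneg {p : Ω → ℝ} (hp : ∀ ω, 0 ≤ p ω) (U : Ω → 𝒰) (u : 𝒰) :
    0 ≤ marg p U u :=
  Finset.sum_nonneg fun ω _ => by split_ifs; exacts [hp ω, le_refl 0]

lemma condPMF_nonneg {p : Ω → ℝ} (hp : ∀ ω, 0 ≤ p ω) (U : Ω → 𝒰) (u : 𝒰) :
    ∀ ω, 0 ≤ condPMF p U u ω :=
  fun ω => div_nonneg (by split_ifs; exacts [hp ω, le_refl 0]) (marg_nonneg hp U u)

lemma condPMF_support {p : Ω → ℝ} {U : Ω → 𝒰} {u : 𝒰} {ω : Ω}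
    (h : condPMF p U u ω ≠ 0) : U ω = u := by
  by_contra hU
  exact h (by unfold condPMF; rw [if_neg hU, zero_div])

def piece (p : Ω → ℝ) (U : Ω → 𝒰) (f g : Ω → ℝ) (u : 𝒰) : ℝ :=
  ∑ ω, if U ω = u then p ω * ((f ω - cexp p U u f) * (g ω - cexp p U u g)) else 0

lemma ccov_eq_sum_piece [Fintype 𝒰] (p : Ω → ℝ) (U : Ω → 𝒰) (f g : Ω → ℝ) :
    ccov p U f g = ∑ u, piece p U f g u := by
  unfold ccov expec piece
  rw [Finset.sum_comm]
  exact Finset.sum_congr rfl fun ω _ => by simp [Finset.sum_ite_eq]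

lemma piece_self_nonneg {p : Ω → ℝ} (hp : ∀ ω, 0 ≤ p ω) (U : Ω → 𝒰) (f : Ω → ℝ)
    (u : 𝒰) : 0 ≤ piece p U f f u :=
  Finset.sum_nonneg fun ω _ => by
    split_ifs
    · exact mul_nonneg (hp ω) (mul_self_nonneg _)
    · exact le_refl 0

lemma piece_zero {p : Ω → ℝ} (hp : ∀ ω, 0 ≤ p ω) {U : Ω → 𝒰} {u : 𝒰}
    (hm : marg p U u = 0) (f g : Ω → ℝ) : piece p U f g u = 0 := by
  have hpω : ∀ ω, U ω = u → p ω = 0 := by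
    intro ω hω
    have := (Finset.sum_eq_zero_iff_of_nonneg (fun ω _ => by
      split_ifs; exacts [hp ω, le_refl 0])).mp hm ω (Finset.mem_univ ω)
    rwa [if_pos hω] at this
  refine Finset.sum_eq_zero fun ω _ => ?_
  split_ifs with h
  · rw [hpω ω h, zero_mul]
  · rfl

lemma sum_condPMF {p : Ω → ℝ} {U : Ω → 𝒰} {u : 𝒰} (hm : marg p U u ≠ 0) :
    ∑ ω, condPMF p U u ω = 1 := by
  unfold condPMF
  rw [← Finset.sum_div]
  exact div_self hm

lemma cexp_condPMF {p : Ω → ℝ} {U : Ω → 𝒰} {u : 𝒰} (hm : marg p U u ≠ 0) (f : Ω → ℝ) :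
    cexp (condPMF p U u) (fun _ => ()) () f = cexp p U u f := by
  have h1 : marg (condPMF p U u) (fun _ : Ω => ()) () = 1 := by
    unfold marg
    have hite : ∀ ω : Ω, (if (fun _ : Ω => ()) ω = () then condPMF p U u ω else 0) =
        condPMF p U u ω := fun ω => if_pos rfl
    simp only [hite]
    exact sum_condPMF hm
  unfold cexp
  rw [h1, div_one, Finset.sum_div]
  refine Finset.sum_congr rfl fun ω _ => ?_
  rw [if_pos rfl]
  unfold condPMF
  split_ifs with h
  · rw [div_mul_eq_mul_div]
  · simp

lemma piece_eq {p : Ω → ℝ} {U : Ω → 𝒰} {u : 𝒰} (hm : marg p U u ≠ 0) (f g : Ω → ℝ) :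
    piece p U f g u = marg p U u * ccov (condPMF p U u) (fun _ => ()) f g := by
  unfold ccov expec
  rw [Finset.mul_sum]
  unfold piece
  refine Finset.sum_congr rfl fun ω _ => ?_
  dsimp only
  rw [cexp_condPMF hm f, cexp_condPMF hm g]
  unfold condPMF
  split_ifs with h
  · field_simp
  · simp

lemma le_maxCorr {𝒳 𝒴 : Type} {p : Ω → ℝ} (hp : ∀ ω, 0 ≤ p ω) (U : Ω → 𝒰)
    (X : Ω → 𝒳) (Y : Ω → 𝒴) (f₀ : 𝒳 × 𝒰 → ℝ) (g₀ : 𝒴 × 𝒰 → ℝ) :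
    ccorr p U (fun ω => f₀ (X ω, U ω)) (fun ω => g₀ (Y ω, U ω)) ≤ maxCorr p U X Y := by
  unfold maxCorr
  refine le_trans (le_ciSup (f := fun g : 𝒴 × 𝒰 → ℝ =>
      ccorr p U (fun ω => f₀ (X ω, U ω)) (fun ω => g (Y ω, U ω)))
      ⟨1, by rintro _ ⟨g, rfl⟩; exact ccorr_le_one hp _ _ _⟩ g₀) ?_
  exact le_ciSup (f := fun f : 𝒳 × 𝒰 → ℝ => ⨆ g : 𝒴 × 𝒰 → ℝ,
      ccorr p U (fun ω => f (X ω, U ω)) (fun ω => g (Y ω, U ω)))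
      ⟨1, by rintro _ ⟨f, rfl⟩; exact ciSup_le fun g => ccorr_le_one hp _ _ _⟩ f₀

lemma maxCorr_le {𝒳 𝒴 : Type} {p : Ω → ℝ} (U : Ω → 𝒰) (X : Ω → 𝒳) (Y : Ω → 𝒴) {c : ℝ}
    (h : ∀ (f₀ : 𝒳 × 𝒰 → ℝ) (g₀ : 𝒴 × 𝒰 → ℝ),
      ccorr p U (fun ω => f₀ (X ω, U ω)) (fun ω => g₀ (Y ω, U ω)) ≤ c) :
    maxCorr p U X Y ≤ c :=
  ciSup_le fun f₀ => ciSup_le fun g₀ => h f₀ g₀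

lemma le_maxCorr0 {𝒳 𝒴 : Type} {q : Ω → ℝ} (hq : ∀ ω, 0 ≤ q ω)
    (X : Ω → 𝒳) (Y : Ω → 𝒴) (f₀ : 𝒳 × Unit → ℝ) (g₀ : 𝒴 × Unit → ℝ) :
    ccorr q (fun _ => ()) (fun ω => f₀ (X ω, ())) (fun ω => g₀ (Y ω, ())) ≤
      maxCorr0 q X Y :=
  le_maxCorr hq (fun _ => ()) X Y f₀ g₀

lemma maxCorr0_nonneg {𝒳 𝒴 : Type} {q : Ω → ℝ} (hq : ∀ ω, 0 ≤ q ω)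
    (X : Ω → 𝒳) (Y : Ω → 𝒴) : 0 ≤ maxCorr0 q X Y := by
  have h := le_maxCorr0 hq X Y (fun _ => (0:ℝ)) (fun _ => (0:ℝ))
  rwa [show ccorr q (fun _ => ()) (fun ω => (fun _ => (0:ℝ)) (X ω, ()))
      (fun ω => (fun _ => (0:ℝ)) (Y ω, ())) = 0 from ccorr_zero_left _ _] at h

lemma ccov_le_maxCorr0_mul {𝒳 𝒴 : Type} {q : Ω → ℝ} (hq : ∀ ω, 0 ≤ q ω)
    (X : Ω → 𝒳) (Y : Ω → 𝒴) (F G : Ω → ℝ) (f₀ : 𝒳 × Unit → ℝ) (g₀ : 𝒴 × Unit → ℝ)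
    (hF : ∀ ω, q ω ≠ 0 → F ω = f₀ (X ω, ())) (hG : ∀ ω, q ω ≠ 0 → G ω = g₀ (Y ω, ())) :
    ccov q (fun _ => ()) F G ≤ maxCorr0 q X Y *
      (Real.sqrt (cvar q (fun _ => ()) F) * Real.sqrt (cvar q (fun _ => ()) G)) := by
  by_cases h : 0 < cvar q (fun _ => ()) F * cvar q (fun _ => ()) G
  · have hvF : 0 < cvar q (fun _ => ()) F := by
      rcases mul_pos_iff.mp h with ⟨a, _⟩ | ⟨a, _⟩
      · exact a
      · exact absurd a (not_lt.mpr (cvar_nonneg hq _ F))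
    have hvG : 0 < cvar q (fun _ => ()) G := by
      rcases mul_pos_iff.mp h with ⟨_, b⟩ | ⟨_, b⟩
      · exact b
      · exact absurd b (not_lt.mpr (cvar_nonneg hq _ G))
    have hcor : ccorr q (fun _ => ()) F G ≤ maxCorr0 q X Y := by
      rw [ccorr_congr (fun _ => ()) hF hG]
      exact le_maxCorr0 hq X Y f₀ g₀
    have heq : ccorr q (fun _ => ()) F G =
        ccov q (fun _ => ()) F G /
          (Real.sqrt (cvar q (fun _ => ()) F) * Real.sqrt (cvar q (fun _ => ()) G)) := by
      unfold ccorr; rw [if_pos h]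
    rw [heq, div_le_iff₀ (mul_pos (Real.sqrt_pos.mpr hvF) (Real.sqrt_pos.mpr hvG))] at hcor
    linarith [hcor]
  · have hprod : cvar q (fun _ => ()) F * cvar q (fun _ => ()) G = 0 :=
      le_antisymm (not_lt.mp h)
        (mul_nonneg (cvar_nonneg hq _ F) (cvar_nonneg hq _ G))
    have h0 : ccov q (fun _ => ()) F G = 0 := by
      have hsq := ccov_sq_le hq (fun _ => ()) F G
      rw [hprod] at hsq
      have := sq_nonneg (ccov q (fun _ => ()) F G)
      nlinarith
    rw [h0]
    exact mul_nonneg (maxCorr0_nonneg hq X Y)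
      (mul_nonneg (Real.sqrt_nonneg _) (Real.sqrt_nonneg _))

end Helpers3
section Helpers4

open Real

lemma ccorr_scale {a b c m : ℝ} (hm : 0 < m) (ha : 0 ≤ a) (hb : 0 ≤ b) :
    (if 0 < m * a * (m * b) then m * c / (Real.sqrt (m * a) * Real.sqrt (m * b)) else 0) =
    (if 0 < a * b then c / (Real.sqrt a * Real.sqrt b) else 0) := by
  have hcond : (0 < m * a * (m * b)) ↔ (0 < a * b) := by
    have hmm : 0 < m * m := mul_pos hm hm
    constructor
    · intro h
      nlinarith [mul_pos h hmm]
    · intro h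
      nlinarith [mul_pos h hmm]
  by_cases h : 0 < a * b
  · rw [if_pos (hcond.mpr h), if_pos h]
    rw [Real.sqrt_mul hm.le a, Real.sqrt_mul hm.le b]
    have hs := Real.mul_self_sqrt hm.le
    have hrw : Real.sqrt m * Real.sqrt a * (Real.sqrt m * Real.sqrt b) =
        m * (Real.sqrt a * Real.sqrt b) := by
      linear_combination (Real.sqrt a * Real.sqrt b) * hs
    rw [hrw, mul_div_mul_left _ _ (ne_of_gt hm)]
  · rw [if_neg (fun hc => h (hcond.mp hc)), if_neg h]

end Helpers4
/-- Alternative characterization. The conditional maximal correlation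
`ρ_m(X;Y|U)` equals the maximum, over all `u` with `P_U(u) > 0`, of the unconditional
maximal correlation of `X` and `Y` computed under the conditional distribution given
`U = u`. -/
theorem maxCorr_eq_sup_condPMF {Ω 𝒳 𝒴 𝒰 : Type} [Fintype Ω] [Fintype 𝒳] [Fintype 𝒴]
    [Fintype 𝒰] (p : Ω → ℝ) (hp : IsPMF p) (X : Ω → 𝒳) (Y : Ω → 𝒴) (U : Ω → 𝒰) :
    maxCorr p U X Y =
      sSup { r | ∃ u : 𝒰, 0 < marg p U u ∧ r = maxCorr0 (condPMF p U u) X Y } := by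
  classical
  obtain ⟨hp0, hp1⟩ := hp
  set S : Set ℝ :=
    { r | ∃ u : 𝒰, 0 < marg p U u ∧ r = maxCorr0 (condPMF p U u) X Y } with hS
  have hmargsum : ∑ u, marg p U u = 1 := by
    unfold marg
    rw [Finset.sum_comm]
    simpa [Finset.sum_ite_eq] using hp1
  have hex : ∃ u, 0 < marg p U u := by
    by_contra h
    push_neg at h
    have hz : ∀ u, marg p U u = 0 := fun u => le_antisymm (h u) (marg_nonneg hp0 U u)
    have h0 : ∑ u : 𝒰, marg p U u = 0 := Finset.sum_eq_zero fun u _ => hz u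
    rw [hmargsum] at h0
    exact one_ne_zero h0
  obtain ⟨u₀, hu₀⟩ := hex
  have hSne : S.Nonempty := ⟨_, u₀, hu₀, rfl⟩
  have hSfin : S.Finite := by
    have hsub : S ⊆ (fun u => maxCorr0 (condPMF p U u) X Y) '' Set.univ := by
      rintro r ⟨u, _, rfl⟩; exact ⟨u, Set.mem_univ u, rfl⟩
    exact Set.Finite.subset (Set.finite_univ.image _) hsub
  have hSbdd : BddAbove S := hSfin.bddAbove
  have hρ0 : 0 ≤ sSup S :=
    le_csSup_of_le hSbdd ⟨u₀, hu₀, rfl⟩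
      (maxCorr0_nonneg (condPMF_nonneg hp0 U u₀) X Y)
  apply le_antisymm
  · -- maxCorr ≤ sSup S
    refine maxCorr_le U X Y fun f g => ?_
    set F : Ω → ℝ := fun ω => f (X ω, U ω) with hF
    set G : Ω → ℝ := fun ω => g (Y ω, U ω) with hG
    show ccorr p U F G ≤ sSup S
    unfold ccorr
    split_ifs with h
    · have hvF : 0 < cvar p U F := by
        rcases mul_pos_iff.mp h with ⟨a, _⟩ | ⟨a, _⟩
        · exact a
        · exact absurd a (not_lt.mpr (cvar_nonneg hp0 U F))
      have hvG : 0 < cvar p U G := by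
        rcases mul_pos_iff.mp h with ⟨_, b⟩ | ⟨_, b⟩
        · exact b
        · exact absurd b (not_lt.mpr (cvar_nonneg hp0 U G))
      rw [div_le_iff₀ (mul_pos (Real.sqrt_pos.mpr hvF) (Real.sqrt_pos.mpr hvG))]
      have hterm : ∀ u : 𝒰, piece p U F G u ≤
          sSup S * (Real.sqrt (piece p U F F u) * Real.sqrt (piece p U G G u)) := by
        intro u
        by_cases hmu : marg p U u = 0
        · rw [piece_zero hp0 hmu F G]
          exact mul_nonneg hρ0 (mul_nonneg (Real.sqrt_nonneg _) (Real.sqrt_nonneg _))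
        · have hmu' : 0 < marg p U u := (marg_nonneg hp0 U u).lt_of_ne' hmu
          have hqn : ∀ ω, 0 ≤ condPMF p U u ω := condPMF_nonneg hp0 U u
          have hcov := ccov_le_maxCorr0_mul hqn X Y F G
            (fun xz => f (xz.1, u)) (fun yz => g (yz.1, u))
            (fun ω hω => by
              show f (X ω, U ω) = f (X ω, u)
              rw [condPMF_support hω])
            (fun ω hω => by
              show g (Y ω, U ω) = g (Y ω, u)
              rw [condPMF_support hω])
          have hmem : maxCorr0 (condPMF p U u) X Y ∈ S := by
            rw [hS]; exact ⟨u, hmu', rfl⟩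
          have hle : maxCorr0 (condPMF p U u) X Y ≤ sSup S := le_csSup hSbdd hmem
          rw [piece_eq hmu F G, piece_eq hmu F F, piece_eq hmu G G]
          rw [Real.sqrt_mul hmu'.le, Real.sqrt_mul hmu'.le]
          have hs := Real.mul_self_sqrt hmu'.le
          have hrw : sSup S * (Real.sqrt (marg p U u) *
              Real.sqrt (ccov (condPMF p U u) (fun _ => ()) F F) *
              (Real.sqrt (marg p U u) *
              Real.sqrt (ccov (condPMF p U u) (fun _ => ()) G G))) =
              marg p U u * (sSup S *
              (Real.sqrt (ccov (condPMF p U u) (fun _ => ()) F F) *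
               Real.sqrt (ccov (condPMF p U u) (fun _ => ()) G G))) := by
            linear_combination (sSup S * Real.sqrt (ccov (condPMF p U u) (fun _ => ()) F F) *
              Real.sqrt (ccov (condPMF p U u) (fun _ => ()) G G)) * hs
          rw [hrw]
          refine mul_le_mul_of_nonneg_left ?_ hmu'.le
          refine le_trans hcov ?_
          exact mul_le_mul_of_nonneg_right hle
            (mul_nonneg (Real.sqrt_nonneg _) (Real.sqrt_nonneg _))
      calc ccov p U F G = ∑ u, piece p U F G u := ccov_eq_sum_piece p U F G
        _ ≤ ∑ u, sSup S * (Real.sqrt (piece p U F F u) * Real.sqrt (piece p U G G u)) :=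
            Finset.sum_le_sum fun u _ => hterm u
        _ = sSup S * ∑ u, Real.sqrt (piece p U F F u) * Real.sqrt (piece p U G G u) := by
            rw [Finset.mul_sum]
        _ ≤ sSup S * (Real.sqrt (∑ u, piece p U F F u) *
              Real.sqrt (∑ u, piece p U G G u)) := by
            refine mul_le_mul_of_nonneg_left ?_ hρ0
            exact Real.sum_sqrt_mul_sqrt_le Finset.univ
              (fun u => piece_self_nonneg hp0 U F u)
              (fun u => piece_self_nonneg hp0 U G u)
        _ = sSup S * (Real.sqrt (cvar p U F) * Real.sqrt (cvar p U G)) := by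
            rw [← ccov_eq_sum_piece p U F F, ← ccov_eq_sum_piece p U G G]
            rfl
    · exact hρ0
  · -- sSup S ≤ maxCorr
    refine csSup_le hSne ?_
    rintro r ⟨u, hmu, rfl⟩
    have hqn : ∀ ω, 0 ≤ condPMF p U u ω := condPMF_nonneg hp0 U u
    have hmne : marg p U u ≠ 0 := ne_of_gt hmu
    show maxCorr (condPMF p U u) (fun _ => ()) X Y ≤ maxCorr p U X Y
    refine maxCorr_le (fun _ => ()) X Y fun f₀ g₀ => ?_
    set F : 𝒳 × 𝒰 → ℝ := fun xu => if xu.2 = u then f₀ (xu.1, ()) else 0 with hFdef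
    set G : 𝒴 × 𝒰 → ℝ := fun yu => if yu.2 = u then g₀ (yu.1, ()) else 0 with hGdef
    have hzero : ∀ (A B : Ω → ℝ), (∀ ω, U ω ≠ u → A ω = 0) → (∀ ω, U ω ≠ u → B ω = 0) →
        ∀ u', u' ≠ u → piece p U A B u' = 0 := by
      intro A B hA hB u' hne
      by_cases hmu' : marg p U u' = 0
      · exact piece_zero hp0 hmu' A B
      · rw [piece_eq hmu' A B]
        have hc : ccov (condPMF p U u') (fun _ => ()) A B =
            ccov (condPMF p U u') (fun _ => ()) (fun _ => (0:ℝ)) (fun _ => (0:ℝ)) :=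
          ccov_congr _ (fun ω hω => hA ω (by rw [condPMF_support hω]; exact hne))
            (fun ω hω => hB ω (by rw [condPMF_support hω]; exact hne))
        rw [hc, ccov_zero, mul_zero]
    have hdecomp : ∀ (A B a b : Ω → ℝ),
        (∀ ω, U ω ≠ u → A ω = 0) → (∀ ω, U ω ≠ u → B ω = 0) →
        (∀ ω, condPMF p U u ω ≠ 0 → A ω = a ω) →
        (∀ ω, condPMF p U u ω ≠ 0 → B ω = b ω) →
        ccov p U A B = marg p U u * ccov (condPMF p U u) (fun _ => ()) a b := by
      intro A B a b hA0 hB0 hAa hBb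
      rw [ccov_eq_sum_piece p U A B,
        Finset.sum_eq_single_of_mem u (Finset.mem_univ u)
          (fun u' _ hne => hzero A B hA0 hB0 u' hne),
        piece_eq hmne A B, ccov_congr (fun _ : Ω => ()) hAa hBb]
    have hA0 : ∀ ω, U ω ≠ u → F (X ω, U ω) = 0 := fun ω hω => by
      show (if U ω = u then f₀ (X ω, ()) else 0) = 0
      rw [if_neg hω]
    have hB0 : ∀ ω, U ω ≠ u → G (Y ω, U ω) = 0 := fun ω hω => by
      show (if U ω = u then g₀ (Y ω, ()) else 0) = 0
      rw [if_neg hω]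
    have hAa : ∀ ω, condPMF p U u ω ≠ 0 → F (X ω, U ω) = f₀ (X ω, ()) := fun ω hω => by
      show (if U ω = u then f₀ (X ω, ()) else 0) = f₀ (X ω, ())
      rw [if_pos (condPMF_support hω)]
    have hBb : ∀ ω, condPMF p U u ω ≠ 0 → G (Y ω, U ω) = g₀ (Y ω, ()) := fun ω hω => by
      show (if U ω = u then g₀ (Y ω, ()) else 0) = g₀ (Y ω, ())
      rw [if_pos (condPMF_support hω)]
    have e1 := hdecomp (fun ω => F (X ω, U ω)) (fun ω => G (Y ω, U ω))
      (fun ω => f₀ (X ω, ())) (fun ω => g₀ (Y ω, ())) hA0 hB0 hAa hBb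
    have e2 := hdecomp (fun ω => F (X ω, U ω)) (fun ω => F (X ω, U ω))
      (fun ω => f₀ (X ω, ())) (fun ω => f₀ (X ω, ())) hA0 hA0 hAa hAa
    have e3 := hdecomp (fun ω => G (Y ω, U ω)) (fun ω => G (Y ω, U ω))
      (fun ω => g₀ (Y ω, ())) (fun ω => g₀ (Y ω, ())) hB0 hB0 hBb hBb
    have key : ccorr p U (fun ω => F (X ω, U ω)) (fun ω => G (Y ω, U ω)) =
        ccorr (condPMF p U u) (fun _ => ()) (fun ω => f₀ (X ω, ()))
          (fun ω => g₀ (Y ω, ())) := by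
      unfold ccorr cvar
      rw [e1, e2, e3]
      exact ccorr_scale hmu (cvar_nonneg hqn (fun _ => ()) (fun ω => f₀ (X ω, ())))
        (cvar_nonneg hqn (fun _ => ()) (fun ω => g₀ (Y ω, ())))
    have hfin := le_maxCorr hp0 U X Y F G
    rw [key] at hfin
    exact hfin

end GCI
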